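/- Let d ≥ 1, T > 0, θ > 0, and let A, B, f : ℝ^d → ℝ be ℤ^d-periodic with A and B twice continuously differentiable and B(x) > 0 for every x. If the function u(x,t) := B(x)e^{tA(x)} satisfies ∂_t u = (θ/2)Δ_x u − f u on ℝ^d × (0,T), then A is constant. (Key step in the proof of Theorem 'Information Theorem' part (i): the coefficient of t² in the resulting polynomial identity in t forces |∇A|² ≡ 0.) -/

import Mathlib

open MeasureTheory Real Filter

noncomputable section

/-- Partial derivative in the `i`-th spatial coordinate. -/
def pder {d : ℕ} (i : Fin d) (v : (Fin d → ℝ) → ℝ) : (Fin d → ℝ) → ℝ :=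
  fun x => deriv (fun s => v (Function.update x i s)) (x i)

/-- Spatial Laplacian `Δ_x = ∑ᵢ ∂²/∂xᵢ²`. -/
def lap {d : ℕ} (v : (Fin d → ℝ) → ℝ) : (Fin d → ℝ) → ℝ :=
  fun x => ∑ i : Fin d, pder i (pder i v) x

/-- Multi-index spatial derivative `∂^j`. -/
def mder {d : ℕ} (j : Fin d → ℕ) (v : (Fin d → ℝ) → ℝ) : (Fin d → ℝ) → ℝ :=
  (List.finRange d).foldr (fun i acc => (pder i)^[j i] acc) v

/-- `ℤ^d`-periodicity of a function on `ℝ^d`. -/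
def ZPer {d : ℕ} (F : (Fin d → ℝ) → ℝ) : Prop :=
  ∀ (x : Fin d → ℝ) (k : Fin d → ℤ), F (fun i => x i + (k i : ℝ)) = F x

/-- `ℤ^d`-periodicity in the space variable. -/
def ZPerSpace {d : ℕ} (u : (Fin d → ℝ) → ℝ → ℝ) : Prop :=
  ∀ t : ℝ, ZPer fun x => u x t

/-- The fundamental domain `[0,1]^d` of the torus. -/
def unitCube (d : ℕ) : Set (Fin d → ℝ) := Set.Icc 0 1

/-- `L²`-norm on the torus. -/
def l2T {d : ℕ} (F : (Fin d → ℝ) → ℝ) : ℝ :=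
  Real.sqrt (∫ x in unitCube d, (F x) ^ 2)

/-- `L²`-norm on `Q = 𝕋^d × (0,T)`. -/
def l2Q {d : ℕ} (T : ℝ) (u : (Fin d → ℝ) → ℝ → ℝ) : ℝ :=
  Real.sqrt (∫ t in Set.Ioc (0 : ℝ) T, ∫ x in unitCube d, (u x t) ^ 2)

/-- Supremum norm over space. -/
def supT {d : ℕ} (F : (Fin d → ℝ) → ℝ) : ℝ := ⨆ x, |F x|

/-- Supremum norm over `𝕋^d × [0,T]`. -/
def supQ {d : ℕ} (T : ℝ) (u : (Fin d → ℝ) → ℝ → ℝ) : ℝ :=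
  ⨆ x, ⨆ t ∈ Set.Icc (0 : ℝ) T, |u x t|

/-- Squared Sobolev `H^β`-norm on the torus:  `∑_{|j| ≤ β} ‖∂^j F‖²_{L²(𝕋^d)}`. -/
def hSobSq {d : ℕ} (β : ℕ) (F : (Fin d → ℝ) → ℝ) : ℝ :=
  ∑ j ∈ Finset.univ.filter (fun j : Fin d → Fin (β + 1) => (∑ i, (j i : ℕ)) ≤ β),
    ∫ x in unitCube d, (mder (fun i => (j i : ℕ)) F x) ^ 2

/-- Sobolev `H^β`-norm on the torus. -/
def hSob {d : ℕ} (β : ℕ) (F : (Fin d → ℝ) → ℝ) : ℝ := Real.sqrt (hSobSq β F)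

/-- Squared parabolic Sobolev `H^{2,1}(Q)`-norm. -/
def h21Sq {d : ℕ} (T : ℝ) (u : (Fin d → ℝ) → ℝ → ℝ) : ℝ :=
  (∫ t in Set.Ioc (0 : ℝ) T,
      ∑ j ∈ Finset.univ.filter (fun j : Fin d → Fin 3 => (∑ i, (j i : ℕ)) ≤ 2),
        ∫ x in unitCube d, (mder (fun i => (j i : ℕ)) (fun y => u y t) x) ^ 2)
    + ∫ x in unitCube d, ∫ t in Set.Ioc (0 : ℝ) T, ((u x t) ^ 2 + (deriv (u x) t) ^ 2)

/-- Parabolic Sobolev `H^{2,1}(Q)`-norm. -/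
def h21 {d : ℕ} (T : ℝ) (u : (Fin d → ℝ) → ℝ → ℝ) : ℝ := Real.sqrt (h21Sq T u)

/-- Smoothness of a function of space and time. -/
def SmoothQ {d : ℕ} (u : (Fin d → ℝ) → ℝ → ℝ) : Prop :=
  ContDiff ℝ (⊤ : ℕ∞) fun p : (Fin d → ℝ) × ℝ => u p.1 p.2

/-- A smooth classical solution of the heat equation with absorption `f`,
diffusivity `θ` and initial value `u0`. -/
def HeatSol {d : ℕ} (T θ : ℝ) (f u0 : (Fin d → ℝ) → ℝ) (u : (Fin d → ℝ) → ℝ → ℝ) : Prop :=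
  SmoothQ u ∧ ZPerSpace u ∧
    (∀ (x : Fin d → ℝ), ∀ t ∈ Set.Ioc (0 : ℝ) T,
      deriv (u x) t = θ / 2 * lap (fun y => u y t) x - f x * u x t) ∧
    ∀ x, u x 0 = u0 x

/-- A smooth solution of the inhomogeneous problem with forcing `g` and
zero initial value (`v = 𝓛_{θ,f}⁻¹ g`). -/
def InhomSol {d : ℕ} (T θ : ℝ) (f : (Fin d → ℝ) → ℝ) (g v : (Fin d → ℝ) → ℝ → ℝ) : Prop :=
  SmoothQ v ∧ ZPerSpace v ∧
    (∀ (x : Fin d → ℝ), ∀ t ∈ Set.Ioc (0 : ℝ) T,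
      deriv (v x) t = θ / 2 * lap (fun y => v y t) x - f x * v x t + g x t) ∧
    ∀ x, v x 0 = 0

/-- A link function: a smooth function `Φ : ℝ → (fmin, ∞)` with strictly positive
derivative and all derivatives bounded. -/
structure LinkFun where
  toFun : ℝ → ℝ
  fmin : ℝ
  fmin_pos : 0 < fmin
  smooth : ContDiff ℝ (⊤ : ℕ∞) toFun
  gt_fmin : ∀ x, fmin < toFun x
  deriv_pos : ∀ x, 0 < deriv toFun x
  derivs_bdd : ∀ n : ℕ, 1 ≤ n → ∃ C, ∀ x, |iteratedDeriv n toFun x| ≤ C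

/-- The linearized solution `I_{θ,F} h` in direction `h`, associated with a solution `u`. -/
def LinSol {d : ℕ} (T θ : ℝ) (Φ : LinkFun) (F h : (Fin d → ℝ) → ℝ)
    (u z : (Fin d → ℝ) → ℝ → ℝ) : Prop :=
  SmoothQ z ∧ ZPerSpace z ∧
    (∀ (x : Fin d → ℝ), ∀ t ∈ Set.Ioc (0 : ℝ) T,
      deriv (z x) t = θ / 2 * lap (fun y => z y t) x - Φ.toFun (F x) * z x t
        + h x * deriv Φ.toFun (F x) * u x t) ∧
    ∀ x, z x 0 = 0

/-- The `θ`-derivative solution `K̇_θ F`, associated with a solution `u`. -/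
def ThetaDerivSol {d : ℕ} (T θ : ℝ) (Φ : LinkFun) (F : (Fin d → ℝ) → ℝ)
    (u w : (Fin d → ℝ) → ℝ → ℝ) : Prop :=
  SmoothQ w ∧ ZPerSpace w ∧
    (∀ (x : Fin d → ℝ), ∀ t ∈ Set.Ioc (0 : ℝ) T,
      deriv (w x) t = θ / 2 * lap (fun y => w y t) x - Φ.toFun (F x) * w x t
        + 1 / 2 * lap (fun y => u y t) x) ∧
    ∀ x, w x 0 = 0

/-- Dual Sobolev norm `‖G‖_{(H²)*}` on the torus. -/
def h2dual {d : ℕ} (G : (Fin d → ℝ) → ℝ) : ℝ :=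
  sSup {r : ℝ | ∃ g : (Fin d → ℝ) → ℝ, ContDiff ℝ (⊤ : ℕ∞) g ∧ ZPer g ∧ hSob 2 g ≤ 1 ∧
    r = |∫ x in unitCube d, G x * g x|}

end


section AuxLemmas

private lemma deriv_of_contDiff_two_aux (φ : ℝ → ℝ) (hφ : ContDiff ℝ 2 φ) :
    Differentiable ℝ (deriv φ) := by
  have h2 : ContDiff ℝ ((1 : ℕ∞) + 1) φ := by exact_mod_cast hφ
  exact ((contDiff_succ_iff_deriv.mp h2).2.2).differentiable (by simp)

private lemma pder_pder_slice_aux {d : ℕ} (i : Fin d) (v : (Fin d → ℝ) → ℝ) (x : Fin d → ℝ) :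
    pder i (pder i v) x = deriv (deriv (fun s => v (Function.update x i s))) (x i) := by
  unfold pder
  congr 1
  funext s
  simp [Function.update_idem]

private lemma second_deriv_mul_exp_aux (φ ψ : ℝ → ℝ) (hφ : ContDiff ℝ 2 φ)
    (hψ : ContDiff ℝ 2 ψ) (t s₀ : ℝ) :
    deriv (deriv (fun s => φ s * Real.exp (t * ψ s))) s₀ =
      Real.exp (t * ψ s₀) * (deriv (deriv φ) s₀ + 2 * t * deriv φ s₀ * deriv ψ s₀
        + t * φ s₀ * deriv (deriv ψ) s₀ + t ^ 2 * φ s₀ * (deriv ψ s₀) ^ 2) := by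
  have hφd : Differentiable ℝ φ := hφ.differentiable two_ne_zero
  have hψd : Differentiable ℝ ψ := hψ.differentiable two_ne_zero
  have hφ'd : Differentiable ℝ (deriv φ) := deriv_of_contDiff_two_aux φ hφ
  have hψ'd : Differentiable ℝ (deriv ψ) := deriv_of_contDiff_two_aux ψ hψ
  have hd1 : deriv (fun s => φ s * Real.exp (t * ψ s)) =
      fun s => deriv φ s * Real.exp (t * ψ s)
        + φ s * (Real.exp (t * ψ s) * (t * deriv ψ s)) := by
    funext s
    exact ((hφd s).hasDerivAt.mul (((hψd s).hasDerivAt.const_mul t).exp)).deriv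
  rw [hd1]
  have h1 : HasDerivAt (fun s => deriv φ s * Real.exp (t * ψ s))
      (deriv (deriv φ) s₀ * Real.exp (t * ψ s₀)
        + deriv φ s₀ * (Real.exp (t * ψ s₀) * (t * deriv ψ s₀))) s₀ :=
    (hφ'd s₀).hasDerivAt.mul (((hψd s₀).hasDerivAt.const_mul t).exp)
  have h2 : HasDerivAt (fun s => φ s * (Real.exp (t * ψ s) * (t * deriv ψ s)))
      (deriv φ s₀ * (Real.exp (t * ψ s₀) * (t * deriv ψ s₀))
        + φ s₀ * ((Real.exp (t * ψ s₀) * (t * deriv ψ s₀)) * (t * deriv ψ s₀)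
          + Real.exp (t * ψ s₀) * (t * deriv (deriv ψ) s₀))) s₀ :=
    (hφd s₀).hasDerivAt.mul
      ((((hψd s₀).hasDerivAt.const_mul t).exp).mul ((hψ'd s₀).hasDerivAt.const_mul t))
  rw [(h1.fun_add h2).deriv]
  ring

end AuxLemmas

/-- if `u(x,t) = B(x) e^{t A(x)}` solves the heat equation with absorption,
then `A` is constant. -/
theorem exponential_solution_constant_exponent {d : ℕ} (hd : 1 ≤ d) (T θ : ℝ)
    (hT : 0 < T) (hθ : 0 < θ) (A B f : (Fin d → ℝ) → ℝ)
    (hAper : ZPer A) (hBper : ZPer B) (hfper : ZPer f)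
    (hA : ContDiff ℝ 2 A) (hB : ContDiff ℝ 2 B) (hBpos : ∀ x, 0 < B x)
    (hpde : ∀ (x : Fin d → ℝ), ∀ t ∈ Set.Ioo (0 : ℝ) T,
      deriv (fun s : ℝ => B x * Real.exp (s * A x)) t
        = θ / 2 * lap (fun y => B y * Real.exp (t * A y)) x
          - f x * (B x * Real.exp (t * A x))) :
    ∀ x y, A x = A y := by
  have hAd : Differentiable ℝ A := hA.differentiable two_ne_zero
  have pd0 : ∀ (x : Fin d → ℝ) (i : Fin d), pder i A x = 0 := by
    intro x i₀
    set a1 : Fin d → ℝ := fun i => deriv (fun s => A (Function.update x i s)) (x i) with ha1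
    set a2 : Fin d → ℝ := fun i => deriv (deriv (fun s => A (Function.update x i s))) (x i)
      with ha2
    set b1 : Fin d → ℝ := fun i => deriv (fun s => B (Function.update x i s)) (x i) with hb1
    set b2 : Fin d → ℝ := fun i => deriv (deriv (fun s => B (Function.update x i s))) (x i)
      with hb2
    set S0 : ℝ := ∑ i, b2 i with hS0
    set S1 : ℝ := ∑ i, (2 * b1 i * a1 i + B x * a2 i) with hS1
    set S2 : ℝ := ∑ i, B x * (a1 i) ^ 2 with hS2def
    have hφ : ∀ i : Fin d, ContDiff ℝ 2 (fun s => B (Function.update x i s)) :=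
      fun i => hB.comp (contDiff_update 2 x i)
    have hψ : ∀ i : Fin d, ContDiff ℝ 2 (fun s => A (Function.update x i s)) :=
      fun i => hA.comp (contDiff_update 2 x i)
    have hlap : ∀ t : ℝ, lap (fun y => B y * Real.exp (t * A y)) x
        = Real.exp (t * A x) * ∑ i, (b2 i + 2 * t * b1 i * a1 i
            + t * B x * a2 i + t ^ 2 * B x * (a1 i) ^ 2) := by
      intro t
      unfold lap
      rw [Finset.mul_sum]
      refine Finset.sum_congr rfl fun i _ => ?_
      rw [pder_pder_slice_aux]
      have h := second_deriv_mul_exp_aux (fun s => B (Function.update x i s))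
        (fun s => A (Function.update x i s)) (hφ i) (hψ i) t (x i)
      simp only [Function.update_eq_self] at h
      exact h
    have hLHS : ∀ t : ℝ, deriv (fun s : ℝ => B x * Real.exp (s * A x)) t
        = B x * A x * Real.exp (t * A x) := by
      intro t
      have h : HasDerivAt (fun s : ℝ => B x * Real.exp (s * A x))
          (B x * (Real.exp (t * A x) * A x)) t :=
        ((hasDerivAt_mul_const (A x)).exp).const_mul (B x)
      rw [h.deriv]; ring
    have key : ∀ t ∈ Set.Ioo (0 : ℝ) T,
        B x * A x = θ / 2 * (S0 + t * S1 + t ^ 2 * S2) - f x * B x := by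
      intro t ht
      have hp := hpde x t ht
      rw [hLHS t, hlap t] at hp
      have hsum : (∑ i, (b2 i + 2 * t * b1 i * a1 i + t * B x * a2 i
            + t ^ 2 * B x * (a1 i) ^ 2)) = S0 + t * S1 + t ^ 2 * S2 := by
        rw [hS0, hS1, hS2def, Finset.mul_sum, Finset.mul_sum, ← Finset.sum_add_distrib,
          ← Finset.sum_add_distrib]
        exact Finset.sum_congr rfl fun i _ => by ring
      rw [hsum] at hp
      have hexp : Real.exp (t * A x) ≠ 0 := Real.exp_ne_zero _
      have h' : (B x * A x) * Real.exp (t * A x)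
          = (θ / 2 * (S0 + t * S1 + t ^ 2 * S2) - f x * B x) * Real.exp (t * A x) := by
        linear_combination hp
      exact mul_right_cancel₀ hexp h'
    have h1 := key (T / 4) ⟨by linarith, by linarith⟩
    have h2 := key (T / 2) ⟨by linarith, by linarith⟩
    have h3 := key (3 * T / 4) ⟨by linarith, by linarith⟩
    have hS2zero : S2 = 0 := by
      have hk : θ * T ^ 2 * S2 = 0 := by
        linear_combination (-16 : ℝ) * h1 + 32 * h2 + (-16 : ℝ) * h3
      rcases mul_eq_zero.mp hk with h | h
      · exact absurd h (by positivity)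
      · exact h
    have hterm : B x * (a1 i₀) ^ 2 = 0 :=
      (Finset.sum_eq_zero_iff_of_nonneg
        (fun i _ => mul_nonneg (hBpos x).le (sq_nonneg _))).mp hS2zero i₀ (Finset.mem_univ i₀)
    have hsq : (a1 i₀) ^ 2 = 0 := by
      rcases mul_eq_zero.mp hterm with h | h
      · exact absurd h (hBpos x).ne'
      · exact h
    exact pow_eq_zero_iff two_ne_zero |>.mp hsq
  have hfd : ∀ z, fderiv ℝ A z = 0 := by
    intro z
    ext v
    have hbasis : ∀ i : Fin d, (fderiv ℝ A z) (Pi.single i 1) = 0 := by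
      intro i
      have hu := hasDerivAt_update z i (z i)
      have hf : HasFDerivAt A (fderiv ℝ A z) (Function.update z i (z i)) := by
        rw [Function.update_eq_self]; exact (hAd z).hasFDerivAt
      have hcomp := hf.comp_hasDerivAt (z i) hu
      rw [← hcomp.deriv]
      exact pd0 z i
    have hv : v = ∑ i, v i • (Pi.single i 1 : Fin d → ℝ) := by
      ext j; simp [Pi.single_apply]
    rw [hv, map_sum]
    simp [hbasis]
  exact fun x y => is_const_of_fderiv_eq_zero hAd hfd x y
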